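/- If (S, N) is a quadratic normalisation for a monoid M, then the rewriting system (S, R) with R = {s·t → N̄(s·t) : s, t ∈ S, s·t ≠ N̄(s·t)} is quadratic, reduced, normalising and confluent, and it presents M, i.e., M admits the presentation ⟨S | {w = w' : (w → w') ∈ R}⟩. -/

import Mathlib

namespace QN

variable {S A : Type*}

/-- A normalisation: a length-preserving map `N` on words over `S` fixing
length-one words and satisfying `N (u ++ N w ++ v) = N (u ++ w ++ v)`. -/
structure Normalisation (S : Type*) where
  N : List S → List S
  length_eq : ∀ w : List S, (N w).length = w.length
  single : ∀ s : S, N [s] = [s]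
  mid : ∀ u v w : List S, N (u ++ N w ++ v) = N (u ++ w ++ v)

/-- Extract the two entries of a length-two word (with a default fallback). -/
def pairOf : List S → S → S → S × S
  | [x, y], _, _ => (x, y)
  | _, s, t => (s, t)

/-- The restriction `N̄` of `N` to length-two words, as a map on pairs. -/
def nbar (N : List S → List S) (s t : S) : S × S :=
  pairOf (N [s, t]) s t

/-- Apply `f` to the length-two factor at (1-indexed) position `i`;
out-of-range positions act as the identity. -/
def applyAt (f : S → S → S × S) : ℕ → List S → List S
  | 1, a :: b :: l => (f a b).1 :: (f a b).2 :: l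
  | n + 2, a :: l => a :: applyAt f (n + 1) l
  | _, l => l

/-- `φ_u`: apply `φ` at the successive positions of `u`, leftmost entry of `u` first. -/
def applySeq (f : S → S → S × S) (u : List ℕ) (w : List S) : List S :=
  u.foldl (fun w i => applyAt f i w) w

/-- A word is `N`-normal iff all its length-two factors are `N`-normal. -/
def LocallyNormal (N : List S → List S) : Prop :=
  ∀ w : List S, N w = w ↔ ∀ u v : List S, ∀ s t : S, w = u ++ s :: t :: v → N [s, t] = [s, t]

/-- Every word is normalised by finitely many applications of `N̄` at positions. -/
def NbarGenerated (N : List S → List S) : Prop :=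
  ∀ w : List S, ∃ u : List ℕ, N w = applySeq (nbar N) u w

/-- A normalisation map is quadratic if it satisfies the two locality conditions. -/
def Quadratic (N : List S → List S) : Prop :=
  LocallyNormal N ∧ NbarGenerated N

/-- `e` is `N`-neutral: `N (w·e) = N (e·w) = N w · e`. -/
def Neutral (N : List S → List S) (e : S) : Prop :=
  ∀ w : List S, N (w ++ [e]) = N w ++ [e] ∧ N (e :: w) = N w ++ [e]

/-- The alternating sequence of length `m` starting with `k ∈ {1,2}`. -/
def altFrom : ℕ → ℕ → List ℕ
  | _, 0 => []
  | k, n + 1 => k :: altFrom (3 - k) n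

/-- `(S, N)` is of left-class `c`: `N = N̄_{α_c}` on length-three words. -/
def LeftClass (N : List S → List S) (c : ℕ) : Prop :=
  ∀ w : List S, w.length = 3 → N w = applySeq (nbar N) (altFrom 1 c) w

/-- `(S, N)` is of right-class `c`: `N = N̄_{ᾱ_c}` on length-three words. -/
def RightClass (N : List S → List S) (c : ℕ) : Prop :=
  ∀ w : List S, w.length = 3 → N w = applySeq (nbar N) (altFrom 2 c) w

/-- The domino rule is valid for `f`. -/
def DominoRule (f : S → S → S × S) : Prop :=
  ∀ s₁ s₂ s₁' s₂' t₀ t₁ t₂ : S,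
    f t₀ s₁ = (s₁', t₁) → f t₁ s₂ = (s₂', t₂) →
    f s₁ s₂ = (s₁, s₂) → f s₁' s₂' = (s₁', s₂')

/-- The sequences `δ_p`: `δ₁ = ε` and `δ_p = sh(δ_{p-1})·1·2·⋯·(p-1)`. -/
def delta : ℕ → List ℕ
  | 0 => []
  | 1 => []
  | p + 2 => (delta (p + 1)).map (· + 1) ++ List.range' 1 (p + 1)

/-- Apply `N` to the length-`k` factor beginning at (1-indexed) position `i`. -/
def applyFactorAt (N : List S → List S) (k : ℕ) : ℕ → List S → List S
  | 0, w => w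
  | i + 1, w => w.take i ++ N ((w.drop i).take k) ++ w.drop (i + k)

/-- Apply `N` to length-`k` factors at the successive positions of `u`. -/
def applyFactorSeq (N : List S → List S) (k : ℕ) (u : List ℕ) (w : List S) : List S :=
  u.foldl (fun w i => applyFactorAt N k i w) w

/-- One-step rewriting relation of a rewriting system `R`. -/
def RStep (R : List A → List A → Prop) (x y : List A) : Prop :=
  ∃ u v w w', R w w' ∧ x = u ++ w ++ v ∧ y = u ++ w' ++ v

/-- A rewriting system is terminating if it admits no infinite rewriting sequence. -/
def Terminating (R : List A → List A → Prop) : Prop :=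
  ¬ ∃ f : ℕ → List A, ∀ n, RStep R (f n) (f (n + 1))

/-- Confluence of a rewriting system. -/
def Confluent (R : List A → List A → Prop) : Prop :=
  ∀ w w₁ w₂ : List A, Relation.ReflTransGen (RStep R) w w₁ →
    Relation.ReflTransGen (RStep R) w w₂ →
    ∃ w', Relation.ReflTransGen (RStep R) w₁ w' ∧ Relation.ReflTransGen (RStep R) w₂ w'

/-- A word is `R`-normal if no rule of `R` applies to any of its factors. -/
def RNormal (R : List A → List A → Prop) (w : List A) : Prop :=
  ¬ ∃ w', RStep R w w'

/-- Every word rewrites to some `R`-normal word. -/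
def Normalising (R : List A → List A → Prop) : Prop :=
  ∀ w : List A, ∃ w', Relation.ReflTransGen (RStep R) w w' ∧ RNormal R w'

/-- A rewriting system is quadratic if all its rules relate length-two words. -/
def QuadraticRS (R : List A → List A → Prop) : Prop :=
  ∀ w w', R w w' → w.length = 2 ∧ w'.length = 2

/-- A rewriting system is reduced. -/
def ReducedRS (R : List A → List A → Prop) : Prop :=
  ∀ w w', R w w' → RNormal R w' ∧ RNormal (fun a b => R a b ∧ ¬(a = w ∧ b = w')) w

/-- The rewriting system associated with a quadratic normalisation:
one rule `s·t → N̄(s·t)` for each non-`N`-normal length-two word. -/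
def rules (N : List S → List S) : List S → List S → Prop :=
  fun w w' => ∃ s t : S, w = [s, t] ∧ w' = N [s, t] ∧ w' ≠ w

/-- `π_e`: delete all occurrences of `e`, landing in words over `S∖{e}`. -/
noncomputable def pie (e : S) (w : List S) : List {s : S // s ≠ e} :=
  w.filterMap fun s => @dite _ (s = e) (Classical.dec _) (fun _ => none) (fun h => some ⟨s, h⟩)

/-- The rewriting system `R_e` over `S∖{e}`. -/
def rulesE (N : List S → List S) (e : S) :
    List {s : S // s ≠ e} → List {s : S // s ≠ e} → Prop :=
  fun w w' => ∃ s t : {s : S // s ≠ e},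
    w = [s, t] ∧ N [s.1, t.1] ≠ [s.1, t.1] ∧ w' = pie e (N [s.1, t.1])

/-- `M` admits the monoid presentation `⟨S ∣ r⟩`. -/
def PresentedBy (M : Type*) [Monoid M] (S : Type*) (r : List S → List S → Prop) : Prop :=
  Nonempty ((conGen fun a b : FreeMonoid S => r a.toList b.toList).Quotient ≃* M)

/-- Left-divisibility in a monoid. -/
def LeftDvd {M : Type*} [Monoid M] (f g : M) : Prop :=
  ∃ g', f * g' = g

/-- The pair `s₁, s₂` is `S`-normal (greedy). -/
def SNormalPair {M : Type*} [Monoid M] (S : Set M) (s₁ s₂ : M) : Prop :=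
  ∀ s ∈ S, ∀ f : M, LeftDvd s (f * s₁ * s₂) → LeftDvd s (f * s₁)

/-- A word over `S` is `S`-normal if all its adjacent pairs are. -/
def SNormalWord {M : Type*} [Monoid M] (S : Set M) (w : List S) : Prop :=
  ∀ u v : List S, ∀ a b : S, w = u ++ a :: b :: v → SNormalPair S (a : M) (b : M)

end QN

open QN
section Aux

open Relation

variable {S : Type*} (ns : Normalisation S)

lemma N_pair (s t : S) : ∃ x y, ns.N [s, t] = [x, y] ∧ nbar ns.N s t = (x, y) := by
  have h : (ns.N [s, t]).length = 2 := by simpa using ns.length_eq [s, t]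
  obtain ⟨x, y, hxy⟩ := List.length_eq_two.mp h
  exact ⟨x, y, hxy, by simp [nbar, hxy, pairOf]⟩

lemma N_idem (w : List S) : ns.N (ns.N w) = ns.N w := by
  have := ns.mid [] [] w
  simpa using this

lemma rstep_cons {R : List S → List S → Prop} (a : S) {x y : List S} (h : RStep R x y) :
    RStep R (a :: x) (a :: y) := by
  obtain ⟨u, v, w, w', hr, hx, hy⟩ := h
  exact ⟨a :: u, v, w, w', hr, by simp [hx], by simp [hy]⟩

lemma rtg_cons {R : List S → List S → Prop} (a : S) {x y : List S}
    (h : ReflTransGen (RStep R) x y) : ReflTransGen (RStep R) (a :: x) (a :: y) :=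
  ReflTransGen.lift (a :: ·) (fun _ _ => rstep_cons a) _ _ h

lemma rtg_applyAt : ∀ (i : ℕ) (w : List S),
    ReflTransGen (RStep (rules ns.N)) w (applyAt (nbar ns.N) i w)
  | 1, a :: b :: l => by
      obtain ⟨x, y, hxy, hp⟩ := N_pair ns a b
      rw [show applyAt (nbar ns.N) 1 (a :: b :: l)
          = (nbar ns.N a b).1 :: (nbar ns.N a b).2 :: l from rfl, hp]
      by_cases h : ns.N [a, b] = [a, b]
      · rw [hxy] at h
        obtain ⟨rfl, rfl⟩ : x = a ∧ y = b := by simpa using h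
        exact ReflTransGen.refl
      · refine ReflTransGen.single ⟨[], l, [a, b], [x, y],
          ⟨a, b, rfl, hxy.symm, fun hh => h (hxy.trans hh)⟩, by simp, by simp⟩
  | 0, w => by
      cases w with
      | nil => exact ReflTransGen.refl
      | cons a l => exact ReflTransGen.refl
  | 1, [] => ReflTransGen.refl
  | 1, [a] => ReflTransGen.refl
  | n + 2, [] => ReflTransGen.refl
  | n + 2, a :: l => by
      rw [show applyAt (nbar ns.N) (n + 2) (a :: l)
          = a :: applyAt (nbar ns.N) (n + 1) l from rfl]
      exact rtg_cons a (rtg_applyAt (n + 1) l)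

lemma rtg_applySeq (u : List ℕ) : ∀ w : List S,
    ReflTransGen (RStep (rules ns.N)) w (applySeq (nbar ns.N) u w) := by
  induction u with
  | nil => intro w; exact ReflTransGen.refl
  | cons i u ih =>
      intro w
      exact (rtg_applyAt ns i w).trans (ih (applyAt (nbar ns.N) i w))

lemma rtg_to_N (hq : Quadratic ns.N) (w : List S) :
    ReflTransGen (RStep (rules ns.N)) w (ns.N w) := by
  obtain ⟨u, hu⟩ := hq.2 w
  rw [hu]
  exact rtg_applySeq ns u w

lemma rnormal_of_fixed (hq : Quadratic ns.N) {w : List S} (hw : ns.N w = w) :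
    RNormal (rules ns.N) w := by
  rintro ⟨w', u, v, w0, w0', ⟨s, t, h0, h0', hne⟩, hx, hy⟩
  subst h0
  have hst : ns.N [s, t] = [s, t] := (hq.1 w).mp hw u v s t (by simpa using hx)
  exact hne (h0'.trans hst)

lemma N_rstep {x y : List S} (h : RStep (rules ns.N) x y) : ns.N x = ns.N y := by
  obtain ⟨u, v, w0, w0', ⟨s, t, h0, h0', _⟩, hx, hy⟩ := h
  subst hx hy h0 h0'
  exact (ns.mid u v [s, t]).symm

lemma N_rtg {x y : List S} (h : ReflTransGen (RStep (rules ns.N)) x y) :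
    ns.N x = ns.N y := by
  induction h with
  | refl => rfl
  | tail _ hstep ih => exact ih.trans (N_rstep ns hstep)

lemma two_factor {a b s t : S} {u v : List S} (h : [a, b] = u ++ [s, t] ++ v) :
    u = [] ∧ v = [] ∧ s = a ∧ t = b := by
  have hl := congrArg List.length h
  simp at hl
  have hu : u = [] := List.length_eq_zero_iff.mp (by omega)
  have hv : v = [] := List.length_eq_zero_iff.mp (by omega)
  subst hu hv
  simp at h
  exact ⟨rfl, rfl, h.1.symm, h.2.symm⟩

end Aux

/-- The rewriting system associated with a quadratic normalisation for `M`
is quadratic, reduced, normalising and confluent, and it presents `M`. -/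
theorem statement4 {S M : Type*} [Monoid M] (ns : Normalisation S)
    (hq : Quadratic ns.N)
    (hpres : PresentedBy M S fun w w' => w' = ns.N w) :
    QuadraticRS (rules ns.N) ∧ ReducedRS (rules ns.N) ∧ Normalising (rules ns.N) ∧
      Confluent (rules ns.N) ∧ PresentedBy M S (rules ns.N) := by
  refine ⟨?_, ?_, ?_, ?_, ?_⟩
  · -- QuadraticRS
    rintro w w' ⟨s, t, rfl, hw', _⟩
    refine ⟨rfl, ?_⟩
    rw [hw']
    simpa using ns.length_eq [s, t]
  · -- ReducedRS
    rintro w w' ⟨s, t, rfl, hw', hne⟩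
    constructor
    · exact rnormal_of_fixed ns hq (by rw [hw']; exact N_idem ns [s, t])
    · rintro ⟨y, u, v, w0, w0', ⟨⟨s', t', h0, h0', hne'⟩, hnot⟩, hx, hy⟩
      subst h0
      obtain ⟨rfl, rfl, rfl, rfl⟩ := two_factor hx
      exact hnot ⟨rfl, by rw [h0', hw']⟩
  · -- Normalising
    intro w
    exact ⟨ns.N w, rtg_to_N ns hq w, rnormal_of_fixed ns hq (N_idem ns w)⟩
  · -- Confluent
    intro w w₁ w₂ h1 h2
    refine ⟨ns.N w, ?_, ?_⟩
    · rw [N_rtg ns h1]; exact rtg_to_N ns hq w₁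
    · rw [N_rtg ns h2]; exact rtg_to_N ns hq w₂
  · -- Presentation
    obtain ⟨e⟩ := hpres
    set c1 : Con (FreeMonoid S) :=
      conGen fun a b : FreeMonoid S => b.toList = ns.N a.toList with hc1
    set c2 : Con (FreeMonoid S) :=
      conGen fun a b : FreeMonoid S => rules ns.N a.toList b.toList with hc2
    have step_c2 : ∀ x y : List S, RStep (rules ns.N) x y →
        c2 (FreeMonoid.ofList x) (FreeMonoid.ofList y) := by
      rintro x y ⟨u, v, w0, w0', hr, rfl, rfl⟩
      have base : c2 (FreeMonoid.ofList w0) (FreeMonoid.ofList w0') := by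
        rw [hc2]
        have : ConGen.Rel (fun a b : FreeMonoid S => rules ns.N a.toList b.toList)
            (FreeMonoid.ofList w0) (FreeMonoid.ofList w0') :=
          ConGen.Rel.of _ _ (by simpa using hr)
        exact this
      have := c2.mul (c2.mul (c2.refl (FreeMonoid.ofList u)) base)
        (c2.refl (FreeMonoid.ofList v))
      exact this
    have rtg_c2 : ∀ x y : List S, Relation.ReflTransGen (RStep (rules ns.N)) x y →
        c2 (FreeMonoid.ofList x) (FreeMonoid.ofList y) := by
      intro x y h
      induction h with
      | refl => exact c2.refl _
      | tail _ hstep ih => exact c2.trans ih (step_c2 _ _ hstep)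
    have heq : c2 = c1 := by
      apply le_antisymm
      · rw [hc2]
        apply Con.conGen_le.mpr
        rintro a b ⟨s, t, ha, hb, _⟩
        rw [hc1]
        have : ConGen.Rel (fun a b : FreeMonoid S => b.toList = ns.N a.toList) a b :=
          ConGen.Rel.of _ _ (by rw [ha, hb])
        exact this
      · rw [hc1]
        apply Con.conGen_le.mpr
        intro a b h
        have := rtg_c2 a.toList (ns.N a.toList) (rtg_to_N ns hq a.toList)
        have h2 : FreeMonoid.ofList b.toList = FreeMonoid.ofList (ns.N a.toList) := by
          rw [h]
        rw [← h2, FreeMonoid.ofList_toList, FreeMonoid.ofList_toList] at this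
        exact this
    exact ⟨(by rw [heq]; exact e : c2.Quotient ≃* M)⟩
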